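/- For any full binary tree t ≠ {∅}, the refined Horton–Strahler number satisfies the recursion S(t) = max( S_1(t), S_2(t), 2·min(S_1(t), S_2(t)) + 1[S_1(t) > S_2(t)] + 1 ), where S_i(t) = S(θ_i t) is the refined Horton–Strahler number of the subtree rooted at child i of the root. -/

import Mathlib

/-- Words over the alphabet {1,2}, encoded as lists of booleans (`false` = 1, `true` = 2). -/
abbrev Word := List Bool

/-- Longest common prefix of two words (`u ∧ v`). -/
def lcp : Word → Word → Word
  | a :: as, b :: bs => if a = b then a :: lcp as bs else []
  | _, _ => []

/-- The lexicographic (strict) order on words; a strict prefix is smaller. -/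
def wlex (u v : Word) : Prop := List.Lex (· < ·) u v

/-- A binary tree: a finite, prefix-closed set of words containing the empty word. -/
def IsBinaryTree (t : Set Word) : Prop :=
  t.Finite ∧ ([] : Word) ∈ t ∧ ∀ u ∈ t, ∀ v : Word, v <+: u → v ∈ t

/-- Fullness: each vertex has either zero or two children. -/
def IsFull (t : Set Word) : Prop :=
  ∀ u ∈ t, (u ++ [false] ∈ t ↔ u ++ [true] ∈ t)

def IsFullBinaryTree (t : Set Word) : Prop := IsBinaryTree t ∧ IsFull t

/-- `φ` is an embedding of `t` into `t'`: injective on `t`, strictly increasing for the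
lexicographic order, and preserving longest common prefixes. -/
def IsEmbedding (t t' : Set Word) (φ : Word → Word) : Prop :=
  (∀ u ∈ t, φ u ∈ t') ∧
  (∀ u ∈ t, ∀ v ∈ t, u ≠ v → φ u ≠ φ v) ∧
  (∀ u ∈ t, ∀ v ∈ t, wlex u v → wlex (φ u) (φ v)) ∧
  (∀ u ∈ t, ∀ v ∈ t, φ (lcp u v) = lcp (φ u) (φ v))

/-- `t` can be embedded in `t'`. -/
def Embeds (t t' : Set Word) : Prop := ∃ φ, IsEmbedding t t' φ

/-- `graft b t = b · t`, the copy of `t` rooted at the child `b` of the root. -/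
def graft (b : Bool) (t : Set Word) : Set Word := (fun w => b :: w) '' t

/-- The interpolating trees: τ₀ = {∅}, τ₁ = {∅,1,2},
τ_{2m} = {∅} ∪ 1·τ_m ∪ 2·τ_{m-1}, τ_{2m+1} = {∅} ∪ 1·τ_m ∪ 2·τ_m (for m ≥ 1). -/
def tau : ℕ → Set Word
  | 0 => {[]}
  | 1 => {[], [false], [true]}
  | n + 2 => {[]} ∪ graft false (tau ((n + 2) / 2)) ∪ graft true (tau ((n + 1) / 2))
termination_by n => n
decreasing_by all_goals omega

/-- The subtree of `t` rooted at `u`: θ_u t = {v : uv ∈ t}. -/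
def subtreeAt (u : Word) (t : Set Word) : Set Word := {v | u ++ v ∈ t}

/-- The refined Horton–Strahler number S(t) = max {r : τ_r embeds in t}. -/
noncomputable def RHS (t : Set Word) : ℕ := sSup {r | Embeds (tau r) t}

/-- S_u(t) = S(θ_u t). -/
noncomputable def Sv (u : Word) (t : Set Word) : ℕ := RHS (subtreeAt u t)

/-- The set of internal vertices of `t` (those having a child in `t`). -/
def internals (t : Set Word) : Set Word :=
  {u | u ∈ t ∧ (u ++ [false] ∈ t ∨ u ++ [true] ∈ t)}



@[simp] lemma lcp_nil_left (v : Word) : lcp [] v = [] := by cases v <;> rfl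
@[simp] lemma lcp_nil_right (u : Word) : lcp u [] = [] := by cases u <;> rfl
@[simp] lemma lcp_cons_same (b : Bool) (u v : Word) : lcp (b::u) (b::v) = b :: lcp u v := by
  simp [lcp]
@[simp] lemma lcp_cons_diff {a b : Bool} (h : a ≠ b) (u v : Word) : lcp (a::u) (b::v) = [] := by
  simp [lcp, h]

lemma lcp_prefix_left : ∀ u v : Word, lcp u v <+: u
  | [], v => by simp
  | a :: as, [] => by simp
  | a :: as, b :: bs => by
    by_cases h : a = b
    · subst h; simpa using lcp_prefix_left as bs
    · simp [lcp, h]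

lemma lcp_prefix_right : ∀ u v : Word, lcp u v <+: v
  | [], v => by simp
  | a :: as, [] => by simp
  | a :: as, b :: bs => by
    by_cases h : a = b
    · subst h; simpa using lcp_prefix_right as bs
    · simp [lcp, h]

@[simp] lemma lcp_self (u : Word) : lcp u u = u := by
  induction u with
  | nil => rfl
  | cons a as ih => simp [ih]

lemma wlex_nil {v : Word} (h : v ≠ []) : wlex [] v := by
  cases v with
  | nil => exact absurd rfl h
  | cons a as => exact List.Lex.nil

lemma wlex_cons_same {a : Bool} {u v : Word} (h : wlex u v) : wlex (a::u) (a::v) :=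
  List.Lex.cons h

lemma wlex_cons_same_inv {a : Bool} {u v : Word} (h : wlex (a::u) (a::v)) : wlex u v :=
  List.lex_cons_iff.mp h

lemma wlex_false_true (u v : Word) : wlex (false::u) (true::v) :=
  List.Lex.rel (by decide)

lemma not_wlex_true_false (u v : Word) : ¬ wlex (true::u) (false::v) := by
  intro h
  cases h with
  | rel h => exact absurd h (by decide)

lemma not_wlex_cons_nil (a : Bool) (u : Word) : ¬ wlex (a::u) [] := by
  intro h; cases h

lemma wlex_irrefl (u : Word) : ¬ wlex u u := by
  intro h; exact irrefl_of (List.Lex (·<·)) u h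



def node (a b : Set Word) : Set Word := {[]} ∪ graft false a ∪ graft true b

lemma mem_node {a b : Set Word} {w : Word} :
    w ∈ node a b ↔ w = [] ∨ (∃ x ∈ a, w = false :: x) ∨ (∃ x ∈ b, w = true :: x) := by
  simp [node, graft, Set.mem_union, Set.mem_image, eq_comm, or_assoc]

@[simp] lemma nil_mem_node (a b : Set Word) : ([] : Word) ∈ node a b := by
  simp [mem_node]

@[simp] lemma cons_mem_node {a b : Set Word} {x : Word} {c : Bool} :
    c :: x ∈ node a b ↔ (c = false ∧ x ∈ a) ∨ (c = true ∧ x ∈ b) := by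
  cases c <;> simp [mem_node]

lemma tau_node : ∀ r : ℕ, 1 ≤ r → tau r = node (tau (r / 2)) (tau ((r - 1) / 2))
  | 1, _ => by
    show tau 1 = node (tau 0) (tau 0)
    ext w
    simp [tau, node, graft, Set.mem_image]
    constructor
    · rintro (h | h | h) <;> simp [h]
    · rintro (h | h | h) <;> simp [h]
  | (n+2), _ => by
    show _ = node (tau ((n+2)/2)) (tau ((n+1)/2))
    rw [tau]
    rfl

@[simp] lemma nil_mem_tau : ∀ r : ℕ, ([] : Word) ∈ tau r
  | 0 => by simp [tau]
  | 1 => by simp [tau]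
  | (n+2) => by rw [tau_node (n+2) (by omega)]; simp

/-- tau is closed under lcp. -/
lemma tau_lcp_closed : ∀ r : ℕ, ∀ u ∈ tau r, ∀ v ∈ tau r, lcp u v ∈ tau r := by
  intro r
  induction r using Nat.strong_induction_on with
  | _ r ih =>
    rcases Nat.eq_zero_or_pos r with hr | hr
    · subst hr; intro u hu v hv
      simp [tau] at hu hv; subst hu; subst hv; simp [tau]
    · rw [tau_node r hr]
      intro u hu v hv
      rw [mem_node] at hu hv
      rcases hu with rfl | ⟨x, hx, rfl⟩ | ⟨x, hx, rfl⟩ <;>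
          rcases hv with rfl | ⟨y, hy, rfl⟩ | ⟨y, hy, rfl⟩
      · simp
      · simp
      · simp
      · simp
      · rw [lcp_cons_same]
        exact mem_node.mpr (Or.inr (Or.inl ⟨lcp x y, ih _ (by omega) x hx y hy, rfl⟩))
      · rw [lcp_cons_diff (by decide)]; simp
      · simp
      · rw [lcp_cons_diff (by decide)]; simp
      · rw [lcp_cons_same]
        exact mem_node.mpr (Or.inr (Or.inr ⟨lcp x y, ih _ (by omega) x hx y hy, rfl⟩))

/-- tau is prefix closed. -/
lemma tau_prefix_closed : ∀ r : ℕ, ∀ u ∈ tau r, ∀ v : Word, v <+: u → v ∈ tau r := by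
  intro r
  induction r using Nat.strong_induction_on with
  | _ r ih =>
    rcases Nat.eq_zero_or_pos r with hr | hr
    · subst hr; intro u hu v hv
      simp [tau] at hu; subst hu
      simpa [tau] using List.prefix_nil.mp hv
    · rw [tau_node r hr]
      intro u hu v hv
      rw [mem_node] at hu
      rcases hu with rfl | ⟨x, hx, rfl⟩ | ⟨x, hx, rfl⟩
      · obtain rfl := List.prefix_nil.mp hv; simp
      · rcases hv with ⟨s, hs⟩
        cases v with
        | nil => simp
        | cons c cs =>
          simp at hs
          obtain ⟨rfl, hcs⟩ := hs
          exact mem_node.mpr (Or.inr (Or.inl ⟨cs, ih _ (by omega) x hx cs ⟨s, hcs⟩, rfl⟩))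
      · rcases hv with ⟨s, hs⟩
        cases v with
        | nil => simp
        | cons c cs =>
          simp at hs
          obtain ⟨rfl, hcs⟩ := hs
          exact mem_node.mpr (Or.inr (Or.inr ⟨cs, ih _ (by omega) x hx cs ⟨s, hcs⟩, rfl⟩))

lemma tau_finite : ∀ r : ℕ, (tau r).Finite := by
  intro r
  induction r using Nat.strong_induction_on with
  | _ r ih =>
    rcases Nat.eq_zero_or_pos r with hr | hr
    · subst hr; simp [tau]
    · rw [tau_node r hr]
      exact (Set.finite_singleton _ |>.union ((ih _ (by omega)).image _)).union
        ((ih _ (by omega)).image _)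

/-! ### Embeds: basic properties -/

lemma Embeds.refl (t : Set Word) : Embeds t t :=
  ⟨id, fun u hu => hu, fun _ _ _ _ h => h, fun _ _ _ _ h => h, fun _ _ _ _ => rfl⟩

lemma Embeds.trans {a b c : Set Word} (h1 : Embeds a b) (h2 : Embeds b c) : Embeds a c := by
  obtain ⟨φ, hφ1, hφ2, hφ3, hφ4⟩ := h1
  obtain ⟨ψ, hψ1, hψ2, hψ3, hψ4⟩ := h2
  refine ⟨ψ ∘ φ, fun u hu => hψ1 _ (hφ1 u hu), ?_, ?_, ?_⟩
  · exact fun u hu v hv hne => hψ2 _ (hφ1 u hu) _ (hφ1 v hv) (hφ2 u hu v hv hne)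
  · exact fun u hu v hv h => hψ3 _ (hφ1 u hu) _ (hφ1 v hv) (hφ3 u hu v hv h)
  · intro u hu v hv
    simp only [Function.comp]
    rw [hφ4 u hu v hv, hψ4 _ (hφ1 u hu) _ (hφ1 v hv)]

/-- Lift an embedding into a subtree to an embedding into the tree. -/
lemma Embeds.lift {s t : Set Word} (b : Bool) (h : Embeds s (subtreeAt [b] t)) :
    Embeds s t := by
  obtain ⟨φ, hφ1, hφ2, hφ3, hφ4⟩ := h
  refine ⟨fun u => b :: φ u, fun u hu => hφ1 u hu, ?_, ?_, ?_⟩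
  · intro u hu v hv hne heq
    exact hφ2 u hu v hv hne (List.cons_injective heq)
  · intro u hu v hv h
    exact wlex_cons_same (hφ3 u hu v hv h)
  · intro u hu v hv
    dsimp only
    rw [lcp_cons_same, hφ4 u hu v hv]

/-- Push an embedding whose image all starts with `b` down into the subtree. -/
lemma Embeds.descend {s t : Set Word} {φ : Word → Word} (b : Bool)
    (hemb : IsEmbedding s t φ)
    (hlcp : ∀ u ∈ s, ∀ v ∈ s, lcp u v ∈ s)
    (hb : ∀ u ∈ s, ∃ v, φ u = b :: v) :
    Embeds s (subtreeAt [b] t) := by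
  obtain ⟨hφ1, hφ2, hφ3, hφ4⟩ := hemb
  refine ⟨fun u => (φ u).tail, ?_, ?_, ?_, ?_⟩
  · intro u hu
    obtain ⟨v, hv⟩ := hb u hu
    have := hφ1 u hu
    dsimp only
    rw [hv] at this ⊢
    exact this
  · intro u hu v hv hne heq
    obtain ⟨x, hx⟩ := hb u hu
    obtain ⟨y, hy⟩ := hb v hv
    apply hφ2 u hu v hv hne
    dsimp only at heq
    rw [hx, hy] at heq ⊢
    simpa using heq
  · intro u hu v hv h
    obtain ⟨x, hx⟩ := hb u hu
    obtain ⟨y, hy⟩ := hb v hv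
    have := hφ3 u hu v hv h
    rw [hx, hy] at this
    dsimp only
    rw [hx, hy]
    exact wlex_cons_same_inv this
  · intro u hu v hv
    obtain ⟨x, hx⟩ := hb u hu
    obtain ⟨y, hy⟩ := hb v hv
    obtain ⟨z, hz⟩ := hb (lcp u v) (hlcp u hu v hv)
    have := hφ4 u hu v hv
    rw [hx, hy, hz, lcp_cons_same] at this
    dsimp only
    rw [hx, hy, hz]
    simpa using this

/-- Combine embeddings into the two subtrees into an embedding of a `node`. -/
lemma Embeds.pair {s1 s2 t : Set Word}
    (h1 : Embeds s1 (subtreeAt [false] t)) (h2 : Embeds s2 (subtreeAt [true] t))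
    (hnil : ([] : Word) ∈ t) : Embeds (node s1 s2) t := by
  obtain ⟨φ, hφ1, hφ2, hφ3, hφ4⟩ := h1
  obtain ⟨ψ, hψ1, hψ2, hψ3, hψ4⟩ := h2
  refine ⟨fun u => match u with
    | [] => []
    | false :: u' => false :: φ u'
    | true :: u' => true :: ψ u', ?_, ?_, ?_, ?_⟩
  · intro u hu
    rw [mem_node] at hu
    rcases hu with rfl | ⟨x, hx, rfl⟩ | ⟨x, hx, rfl⟩
    · exact hnil
    · exact hφ1 x hx
    · exact hψ1 x hx
  · intro u hu v hv hne
    rw [mem_node] at hu hv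
    rcases hu with rfl | ⟨x, hx, rfl⟩ | ⟨x, hx, rfl⟩ <;>
        rcases hv with rfl | ⟨y, hy, rfl⟩ | ⟨y, hy, rfl⟩ <;> dsimp only
    · exact absurd rfl hne
    · simp
    · simp
    · simp
    · intro h
      exact hφ2 x hx y hy (by simpa using hne) (by simpa using h)
    · simp
    · simp
    · simp
    · intro h
      exact hψ2 x hx y hy (by simpa using hne) (by simpa using h)
  · intro u hu v hv h
    rw [mem_node] at hu hv
    rcases hu with rfl | ⟨x, hx, rfl⟩ | ⟨x, hx, rfl⟩ <;>
        rcases hv with rfl | ⟨y, hy, rfl⟩ | ⟨y, hy, rfl⟩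
    · exact absurd h (wlex_irrefl _)
    · exact wlex_nil (by simp)
    · exact wlex_nil (by simp)
    · exact absurd h (not_wlex_cons_nil _ _)
    · exact wlex_cons_same (hφ3 x hx y hy (wlex_cons_same_inv h))
    · exact wlex_false_true _ _
    · exact absurd h (not_wlex_cons_nil _ _)
    · exact absurd h (not_wlex_true_false _ _)
    · exact wlex_cons_same (hψ3 x hx y hy (wlex_cons_same_inv h))
  · intro u hu v hv
    rw [mem_node] at hu hv
    rcases hu with rfl | ⟨x, hx, rfl⟩ | ⟨x, hx, rfl⟩ <;>
        rcases hv with rfl | ⟨y, hy, rfl⟩ | ⟨y, hy, rfl⟩ <;> dsimp only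
    · simp
    · simp
    · simp
    · simp
    · rw [lcp_cons_same, lcp_cons_same]
      show false :: φ (lcp x y) = false :: lcp (φ x) (φ y)
      rw [hφ4 x hx y hy]
    · rw [lcp_cons_diff (by decide), lcp_cons_diff (by decide)]
    · simp
    · rw [lcp_cons_diff (by decide), lcp_cons_diff (by decide)]
    · rw [lcp_cons_same, lcp_cons_same]
      show true :: ψ (lcp x y) = true :: lcp (ψ x) (ψ y)
      rw [hψ4 x hx y hy]

lemma Embeds.of_subset {s t : Set Word} (h : s ⊆ t) : Embeds s t :=
  ⟨id, fun u hu => h hu, fun _ _ _ _ hne => hne, fun _ _ _ _ hl => hl, fun _ _ _ _ => rfl⟩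

@[simp] lemma subtreeAt_node_false (a b : Set Word) : subtreeAt [false] (node a b) = a := by
  ext v; simp [subtreeAt]

@[simp] lemma subtreeAt_node_true (a b : Set Word) : subtreeAt [true] (node a b) = b := by
  ext v; simp [subtreeAt]

lemma tau_mono_step : ∀ r : ℕ, Embeds (tau r) (tau (r + 1)) := by
  intro r
  induction r using Nat.strong_induction_on with
  | _ r ih =>
    rcases Nat.eq_zero_or_pos r with hr | hr
    · subst hr
      apply Embeds.of_subset
      intro u hu
      simp only [tau] at hu ⊢
      simp at hu; simp [hu]
    · rw [tau_node r hr, tau_node (r+1) (by omega)]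
      have e1 : Embeds (tau (r / 2)) (tau ((r + 1) / 2)) := by
        rcases Nat.lt_or_ge ((r+1)/2) (r/2 + 1) with h | h
        · have : (r+1)/2 = r/2 := by omega
          rw [this]; exact Embeds.refl _
        · have : (r+1)/2 = r/2 + 1 := by omega
          rw [this]; exact ih (r/2) (by omega)
      have e2 : Embeds (tau ((r - 1) / 2)) (tau ((r + 1 - 1) / 2)) := by
        rcases Nat.lt_or_ge (r/2) ((r-1)/2 + 1) with h | h
        · have : (r+1-1)/2 = (r-1)/2 := by omega
          rw [this]; exact Embeds.refl _
        · have : (r+1-1)/2 = (r-1)/2 + 1 := by omega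
          rw [this]; exact ih ((r-1)/2) (by omega)
      apply Embeds.pair
      · rw [subtreeAt_node_false]; exact e1
      · rw [subtreeAt_node_true]; exact e2
      · simp

lemma tau_mono {r s : ℕ} (h : r ≤ s) : Embeds (tau r) (tau s) := by
  induction s, h using Nat.le_induction with
  | base => exact Embeds.refl _
  | succ n hn ih => exact ih.trans (tau_mono_step n)

/-! ### Cardinality -/

lemma graft_ncard (b : Bool) (A : Set Word) : (graft b A).ncard = A.ncard :=
  Set.ncard_image_of_injective _ (List.cons_injective)

lemma tau_ncard : ∀ r : ℕ, r + 1 ≤ (tau r).ncard := by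
  intro r
  induction r using Nat.strong_induction_on with
  | _ r ih =>
    match r with
    | 0 => simp [tau]
    | 1 =>
      have hsub : ({[], [false]} : Set Word) ⊆ tau 1 := by
        intro u hu; rcases hu with rfl | rfl <;> simp [tau]
      calc 2 = ({[], [false]} : Set Word).ncard := (Set.ncard_pair (by simp)).symm
        _ ≤ (tau 1).ncard := Set.ncard_le_ncard hsub (tau_finite 1)
    | (n+2) =>
      set r := n + 2
      have hA := ih (r/2) (by omega)
      have hB := ih ((r-1)/2) (by omega)
      have hfA : (graft false (tau (r/2))).Finite := (tau_finite _).image _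
      have hfB : (graft true (tau ((r-1)/2))).Finite := (tau_finite _).image _
      have hd1 : Disjoint (graft false (tau (r/2))) (graft true (tau ((r-1)/2))) := by
        rw [Set.disjoint_iff_inter_eq_empty]
        ext w; simp only [Set.mem_inter_iff, Set.mem_empty_iff_false, iff_false]
        rintro ⟨⟨x, _, rfl⟩, ⟨y, _, h⟩⟩
        simp at h
      have hd2 : Disjoint ({[]} : Set Word) (graft false (tau (r/2)) ∪ graft true (tau ((r-1)/2))) := by
        rw [Set.disjoint_iff_inter_eq_empty]
        ext w; simp only [Set.mem_inter_iff, Set.mem_empty_iff_false, iff_false]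
        rintro ⟨rfl, (⟨x, _, h⟩ | ⟨x, _, h⟩)⟩ <;> simp at h
      have hcalc : (tau r).ncard = 1 + ((tau (r/2)).ncard + (tau ((r-1)/2)).ncard) := by
        rw [tau_node r (by omega), node, Set.union_assoc, Set.ncard_union_eq hd2 (Set.finite_singleton _) (hfA.union hfB),
          Set.ncard_union_eq hd1 hfA hfB, Set.ncard_singleton, graft_ncard, graft_ncard]
      rw [hcalc]
      omega

lemma embeds_card_le {s t : Set Word} (hfin : t.Finite) (hsfin : s.Finite) (h : Embeds s t) :
    s.ncard ≤ t.ncard := by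
  obtain ⟨φ, hφ1, hφ2, _, _⟩ := h
  have hinj : Set.InjOn φ s := by
    intro u hu v hv heq
    by_contra hne
    exact hφ2 u hu v hv hne heq
  calc s.ncard = (φ '' s).ncard := (Set.ncard_image_of_injOn hinj).symm
    _ ≤ t.ncard := Set.ncard_le_ncard (fun w ⟨u, hu, he⟩ => he ▸ hφ1 u hu) hfin

lemma embeds_tau_bdd {t : Set Word} (hfin : t.Finite) : BddAbove {r | Embeds (tau r) t} := by
  refine ⟨t.ncard, fun r hr => ?_⟩
  have := embeds_card_le hfin (tau_finite r) hr
  have := tau_ncard r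
  omega

lemma embeds_tau_zero {t : Set Word} (hnil : ([] : Word) ∈ t) : Embeds (tau 0) t := by
  apply Embeds.of_subset
  intro u hu
  simp [tau] at hu; subst hu; exact hnil

lemma embeds_tau_RHS {t : Set Word} (hfin : t.Finite) (hnil : ([] : Word) ∈ t) :
    Embeds (tau (RHS t)) t :=
  Nat.sSup_mem ⟨0, embeds_tau_zero hnil⟩ (embeds_tau_bdd hfin)

lemma le_RHS {t : Set Word} (hfin : t.Finite) {r : ℕ} (h : Embeds (tau r) t) : r ≤ RHS t :=
  le_csSup (embeds_tau_bdd hfin) h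

lemma embeds_of_le_RHS {t : Set Word} (hfin : t.Finite) (hnil : ([] : Word) ∈ t) {r : ℕ}
    (h : r ≤ RHS t) : Embeds (tau r) t :=
  (tau_mono h).trans (embeds_tau_RHS hfin hnil)

/-! ### Decomposition -/

lemma lcp_nil_head_ne {c d : Bool} {s s' : Word} (h : lcp (c::s) (d::s') = []) : c ≠ d := by
  intro he; subst he; simp at h

lemma heads_of_wlex_ne {c d : Bool} {s s' : Word} (h : wlex (c::s) (d::s')) (hne : c ≠ d) :
    c = false ∧ d = true := by
  cases h with
  | rel h => simpa [Bool.lt_iff] using h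
  | cons h => exact absurd rfl hne

lemma prefix_of_lcp_eq {w u : Word} (h : lcp w u = w) : w <+: u := h ▸ lcp_prefix_right w u

lemma false_mem_tau {r : ℕ} (hr : 1 ≤ r) : [false] ∈ tau r := by
  rw [tau_node r hr]; simp

lemma true_mem_tau {r : ℕ} (hr : 1 ≤ r) : [true] ∈ tau r := by
  rw [tau_node r hr]; simp

lemma embeds_decomp {t : Set Word} {r : ℕ} (hr : 1 ≤ r) (h : Embeds (tau r) t) :
    Embeds (tau r) (subtreeAt [false] t) ∨ Embeds (tau r) (subtreeAt [true] t) ∨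
    (Embeds (tau (r / 2)) (subtreeAt [false] t) ∧
      Embeds (tau ((r - 1) / 2)) (subtreeAt [true] t)) := by
  obtain ⟨φ, hφ⟩ := h
  obtain ⟨hφ1, hφ2, hφ3, hφ4⟩ := hφ
  have hnil : ([] : Word) ∈ tau r := nil_mem_tau r
  have hwpre : ∀ u ∈ tau r, φ [] <+: φ u := by
    intro u hu
    have := hφ4 [] hnil u hu
    rw [lcp_nil_left] at this
    exact prefix_of_lcp_eq this.symm
  have hFmem : [false] ∈ tau r := false_mem_tau hr
  have hTmem : [true] ∈ tau r := true_mem_tau hr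
  match hw : φ [] with
  | (c :: w0) =>
    -- the whole image is below c; descend
    have hb : ∀ u ∈ tau r, ∃ v, φ u = c :: v := by
      intro u hu
      obtain ⟨s, hs⟩ := hwpre u hu
      rw [hw] at hs
      exact ⟨w0 ++ s, by rw [← hs]; simp⟩
    have := Embeds.descend c ⟨hφ1, hφ2, hφ3, hφ4⟩ (tau_lcp_closed r) hb
    cases c
    · exact Or.inl this
    · exact Or.inr (Or.inl this)
  | [] =>
    refine Or.inr (Or.inr ⟨?_, ?_⟩)
    · -- embed tau (r/2) via u' ↦ φ (false :: u')
      have hmem : ∀ u' ∈ tau (r / 2), (false :: u') ∈ tau r := by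
        intro u' hu'
        rw [tau_node r hr]; simp [hu']
      have hF : ∀ u' ∈ tau (r / 2), ∃ v, φ (false :: u') = false :: v := by
        intro u' hu'
        have hu : (false :: u') ∈ tau r := hmem u' hu'
        have hne1 : φ (false :: u') ≠ [] := fun he =>
          hφ2 (false :: u') hu [] hnil (by simp) (by rw [he, hw])
        have hne2 : φ [true] ≠ [] := fun he =>
          hφ2 [true] hTmem [] hnil (by simp) (by rw [he, hw])
        have hlcp : lcp (φ (false :: u')) (φ [true]) = [] := by
          rw [← hφ4 _ hu _ hTmem, lcp_cons_diff (by decide), hw]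
        have hlex : wlex (φ (false :: u')) (φ [true]) :=
          hφ3 _ hu _ hTmem (wlex_false_true _ _)
        match h1 : φ (false :: u'), h2 : φ [true] with
        | [], _ => exact absurd h1 hne1
        | _ :: _, [] => exact absurd h2 hne2
        | c :: s, d :: s' =>
          rw [h1, h2] at hlcp hlex
          obtain ⟨hc, _⟩ := heads_of_wlex_ne hlex (lcp_nil_head_ne hlcp)
          exact ⟨s, by rw [hc]⟩
      have hembF : IsEmbedding (tau (r / 2)) t (fun u' => φ (false :: u')) := by
        refine ⟨fun u hu => hφ1 _ (hmem u hu), ?_, ?_, ?_⟩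
        · intro u hu v hv hne
          exact hφ2 _ (hmem u hu) _ (hmem v hv) (by simpa using hne)
        · intro u hu v hv hl
          exact hφ3 _ (hmem u hu) _ (hmem v hv) (wlex_cons_same hl)
        · intro u hu v hv
          dsimp only
          rw [← lcp_cons_same false u v, hφ4 _ (hmem u hu) _ (hmem v hv)]
      exact Embeds.descend false hembF (tau_lcp_closed _) hF
    · have hmem : ∀ u' ∈ tau ((r - 1) / 2), (true :: u') ∈ tau r := by
        intro u' hu'
        rw [tau_node r hr]; simp [hu']
      have hT : ∀ u' ∈ tau ((r - 1) / 2), ∃ v, φ (true :: u') = true :: v := by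
        intro u' hu'
        have hu : (true :: u') ∈ tau r := hmem u' hu'
        have hne1 : φ (true :: u') ≠ [] := fun he =>
          hφ2 (true :: u') hu [] hnil (by simp) (by rw [he, hw])
        have hne2 : φ [false] ≠ [] := fun he =>
          hφ2 [false] hFmem [] hnil (by simp) (by rw [he, hw])
        have hlcp : lcp (φ [false]) (φ (true :: u')) = [] := by
          rw [← hφ4 _ hFmem _ hu, lcp_cons_diff (by decide), hw]
        have hlex : wlex (φ [false]) (φ (true :: u')) :=
          hφ3 _ hFmem _ hu (wlex_false_true _ _)
        match h1 : φ [false], h2 : φ (true :: u') with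
        | [], _ => exact absurd h1 hne2
        | _ :: _, [] => exact absurd h2 hne1
        | c :: s, d :: s' =>
          rw [h1, h2] at hlcp hlex
          obtain ⟨_, hd⟩ := heads_of_wlex_ne hlex (lcp_nil_head_ne hlcp)
          exact ⟨s', by rw [hd]⟩
      have hembT : IsEmbedding (tau ((r - 1) / 2)) t (fun u' => φ (true :: u')) := by
        refine ⟨fun u hu => hφ1 _ (hmem u hu), ?_, ?_, ?_⟩
        · intro u hu v hv hne
          exact hφ2 _ (hmem u hu) _ (hmem v hv) (by simpa using hne)
        · intro u hu v hv hl
          exact hφ3 _ (hmem u hu) _ (hmem v hv) (wlex_cons_same hl)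
        · intro u hu v hv
          dsimp only
          rw [← lcp_cons_same true u v, hφ4 _ (hmem u hu) _ (hmem v hv)]
      exact Embeds.descend true hembT (tau_lcp_closed _) hT


/-- For a full binary tree `t ≠ {∅}`,
`S(t) = max(S₁(t), S₂(t), 2·min(S₁(t), S₂(t)) + 1[S₁(t) > S₂(t)] + 1)`. -/
theorem rhs_recursion (t : Set Word) (ht : IsFullBinaryTree t)
    (hne : t ≠ {([] : Word)}) :
    RHS t =
      max (max (Sv [false] t) (Sv [true] t))
        (2 * min (Sv [false] t) (Sv [true] t) +
          (if Sv [true] t < Sv [false] t then 1 else 0) + 1) := by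
  obtain ⟨⟨hfin, hnil, hpc⟩, hfull⟩ := ht
  have hchild : [false] ∈ t ∧ [true] ∈ t := by
    have hne' : ∃ u ∈ t, u ≠ [] := by
      by_contra hcon
      push_neg at hcon
      apply hne
      ext u
      constructor
      · intro hu; simp [hcon u hu]
      · intro hu; simp at hu; subst hu; exact hnil
    obtain ⟨u, hu, hune⟩ := hne'
    match u with
    | [] => exact absurd rfl hune
    | c :: u0 =>
      have h1 : [c] ∈ t := hpc _ hu [c] ⟨u0, rfl⟩
      have h2 := hfull [] hnil
      simp only [List.nil_append] at h2
      cases c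
      · exact ⟨h1, h2.mp h1⟩
      · exact ⟨h2.mpr h1, h1⟩
  set t1 := subtreeAt [false] t with ht1def
  set t2 := subtreeAt [true] t with ht2def
  have hfin1 : t1.Finite := hfin.preimage (Set.injOn_of_injective (List.cons_injective))
  have hfin2 : t2.Finite := hfin.preimage (Set.injOn_of_injective (List.cons_injective))
  have hnil1 : ([] : Word) ∈ t1 := by
    show [false] ++ [] ∈ t; simpa using hchild.1
  have hnil2 : ([] : Word) ∈ t2 := by
    show [true] ++ [] ∈ t; simpa using hchild.2
  have hSv1 : Sv [false] t = RHS t1 := rfl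
  have hSv2 : Sv [true] t = RHS t2 := rfl
  rw [hSv1, hSv2]
  have hA1 : Embeds (tau (RHS t1)) t1 := embeds_tau_RHS hfin1 hnil1
  have hA2 : Embeds (tau (RHS t2)) t2 := embeds_tau_RHS hfin2 hnil2
  have le1 : RHS t1 ≤ RHS t := le_RHS hfin (Embeds.lift false hA1)
  have le2 : RHS t2 ≤ RHS t := le_RHS hfin (Embeds.lift true hA2)
  have embK : ∀ K : ℕ, 1 ≤ K → K / 2 ≤ RHS t1 → (K - 1) / 2 ≤ RHS t2 → K ≤ RHS t := by
    intro K hK h1 h2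
    apply le_RHS hfin
    rw [tau_node K hK]
    exact Embeds.pair ((tau_mono h1).trans hA1) ((tau_mono h2).trans hA2) hnil
  apply le_antisymm
  · refine csSup_le (s := {r | Embeds (tau r) t}) ⟨0, embeds_tau_zero hnil⟩ ?_
    intro r hr
    rcases Nat.eq_zero_or_pos r with rfl | hrpos
    · exact Nat.zero_le _
    · rcases embeds_decomp hrpos hr with h | h | ⟨h1, h2⟩
      · have := le_RHS hfin1 h
        rcases lt_or_ge (RHS t2) (RHS t1) with hc | hc
        · rw [if_pos hc]; omega
        · rw [if_neg (not_lt.mpr hc)]; omega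
      · have := le_RHS hfin2 h
        rcases lt_or_ge (RHS t2) (RHS t1) with hc | hc
        · rw [if_pos hc]; omega
        · rw [if_neg (not_lt.mpr hc)]; omega
      · have k1 := le_RHS hfin1 h1
        have k2 := le_RHS hfin2 h2
        rcases lt_or_ge (RHS t2) (RHS t1) with hc | hc
        · rw [if_pos hc]; omega
        · rw [if_neg (not_lt.mpr hc)]; omega
  · apply max_le
    · exact max_le le1 le2
    · rcases lt_or_ge (RHS t2) (RHS t1) with hc | hc
      · rw [if_pos hc]
        exact embK _ (by omega) (by omega) (by omega)
      · rw [if_neg (not_lt.mpr hc)]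
        exact embK _ (by omega) (by omega) (by omega)
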